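/- Let M be an m×n matrix over {0,1} in which every column contains at most w entries equal to 1, and suppose the fairlet size satisfies c̃ ≥ 2w. Then for any integers k ≥ 0 and r ≥ 1, there exists an m×n matrix M' over {0,1} that is fair w.r.t. γ with dr(M') ≤ r and d(M,M') ≤ k if and only if k is at least the number of entries of M equal to 1. (In particular, every matrix M' over {0,1} that is fair w.r.t. γ satisfies d(M,M') ≥ #{(i,j) : M[i,j] = 1}, and equality is attained by the all-zero matrix, which is fair and has a single distinct row.) -/

import Mathlib

variable {m n c : ℕ} {A : Type*} [Fintype A] [DecidableEq A]

/-- The set of distinct row types of a matrix. -/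
def types (M : Fin m → Fin n → A) : Finset (Fin n → A) :=
  Finset.univ.image (fun i => M i)

/-- The number of distinct rows of a matrix. -/
def dr (M : Fin m → Fin n → A) : ℕ := (types M).card

/-- The cluster of a type `τ` in `M`: the set of rows whose type is `τ`. -/
def cluster (M : Fin m → Fin n → A) (τ : Fin n → A) : Finset (Fin m) :=
  Finset.univ.filter (fun i => M i = τ)

/-- The edit cost between two matrices: the number of positions where they differ. -/
def editCost (M M' : Fin m → Fin n → A) : ℕ :=
  ((Finset.univ : Finset (Fin m × Fin n)).filter (fun p => M p.1 p.2 ≠ M' p.1 p.2)).card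

/-- The number of occurrences of color `z` in the coloring `γ`. -/
def colorCount (γ : Fin m → Fin c) (z : Fin c) : ℕ :=
  (Finset.univ.filter (fun i => γ i = z)).card

/-- A set of rows is fair w.r.t. `γ` if it witnesses the same color distribution as `γ`. -/
def fairSet (γ : Fin m → Fin c) (S : Finset (Fin m)) : Prop :=
  ∀ z : Fin c, m * (S.filter (fun i => γ i = z)).card = colorCount γ z * S.card

/-- A matrix is fair if the cluster of each of its types is fair. -/
def fairMatrix (γ : Fin m → Fin c) (M' : Fin m → Fin n → A) : Prop :=
  ∀ τ ∈ types M', fairSet γ (cluster M' τ)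

/-- The fairlet size `c̃ = m / gcd(|γ|_1, …, |γ|_c)`. -/
def fairletSize (γ : Fin m → Fin c) : ℕ :=
  m / Finset.univ.gcd (colorCount γ)

lemma sum_colorCount (γ : Fin m → Fin c) : ∑ z : Fin c, colorCount γ z = m := by
  classical
  have := Finset.card_eq_sum_card_fiberwise
    (f := γ) (s := (Finset.univ : Finset (Fin m))) (t := Finset.univ)
    (fun x _ => Finset.mem_univ _)
  simpa [colorCount] using this.symm

lemma fairSet_card_lower (hm : 0 < m) (γ : Fin m → Fin c)
    (S : Finset (Fin m)) (hS : fairSet γ S) (hne : S.Nonempty) :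
    fairletSize γ ≤ S.card := by
  classical
  set g := Finset.univ.gcd (colorCount γ) with hg
  have hgm : g ∣ m := by
    rw [← sum_colorCount γ]
    exact Finset.dvd_sum fun z _ => Finset.gcd_dvd (Finset.mem_univ z)
  have hz0 : ∃ z, 0 < colorCount γ z := by
    refine ⟨γ ⟨0, hm⟩, ?_⟩
    have : (⟨0, hm⟩ : Fin m) ∈ Finset.univ.filter (fun i => γ i = γ ⟨0, hm⟩) := by
      simp
    exact Finset.card_pos.mpr ⟨_, this⟩
  have hgpos : 0 < g := by
    rcases hz0 with ⟨z, hz⟩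
    rcases Nat.eq_zero_or_pos g with h | h
    · exfalso
      have := (Finset.gcd_eq_zero_iff.mp h) z (Finset.mem_univ z)
      omega
    · exact h
  have hdvd : m ∣ g * S.card := by
    have h1 : m ∣ Finset.univ.gcd (fun z => colorCount γ z * S.card) :=
      Finset.dvd_gcd fun z _ => ⟨_, (hS z).symm⟩
    have h2 : Finset.univ.gcd (fun z => colorCount γ z * S.card) = g * S.card := by
      rw [Finset.gcd_mul_right]
      simp
      exact Or.inl hg.symm
    rwa [h2] at h1
  have hdvd2 : (m / g) ∣ S.card := by
    obtain ⟨t, ht⟩ := hdvd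
    refine ⟨t, ?_⟩
    have hmg : g * (m / g) = m := Nat.mul_div_cancel' hgm
    have : g * S.card = g * (m / g * t) := by rw [← mul_assoc, hmg, ← ht]
    exact Nat.eq_of_mul_eq_mul_left hgpos this
  exact Nat.le_of_dvd (Finset.card_pos.mpr hne) hdvd2

lemma card_filter_prod (P : Fin m → Fin n → Prop) [∀ i j, Decidable (P i j)] :
    ((Finset.univ : Finset (Fin m × Fin n)).filter (fun p => P p.1 p.2)).card
      = ∑ j : Fin n, (Finset.univ.filter (fun i => P i j)).card := by
  rw [Finset.card_filter, Fintype.sum_prod_type, Finset.sum_comm]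
  simp only [Finset.card_filter]

lemma col_ineq (hm : 0 < m) (γ : Fin m → Fin c)
    (M M' : Fin m → Fin n → Fin 2) (w : ℕ)
    (hfair : fairMatrix γ M') (hc : 2 * w ≤ fairletSize γ) (j : Fin n)
    (hwj : (Finset.univ.filter (fun i : Fin m => M i j = 1)).card ≤ w) :
    (Finset.univ.filter (fun i : Fin m => M i j = 1)).card
      ≤ (Finset.univ.filter (fun i : Fin m => M i j ≠ M' i j)).card := by
  classical
  set Sa := Finset.univ.filter (fun i : Fin m => M i j = 1 ∧ M' i j = 1) with hSa
  set Sb := Finset.univ.filter (fun i : Fin m => M i j = 1 ∧ ¬ M' i j = 1) with hSb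
  set Se := Finset.univ.filter (fun i : Fin m => ¬ M i j = 1 ∧ M' i j = 1) with hSe
  have split1 : Sa.card + Sb.card = (Finset.univ.filter (fun i : Fin m => M i j = 1)).card := by
    rw [hSa, hSb, ← Finset.filter_filter, ← Finset.filter_filter]
    exact Finset.card_filter_add_card_filter_not _
  have key : Sa.card ≤ Se.card := by
    by_cases hne : Sa.Nonempty
    · obtain ⟨i0, hi0⟩ := hne
      rw [hSa, Finset.mem_filter] at hi0
      obtain ⟨-, hM0, hM'0⟩ := hi0
      set T := Finset.univ.filter (fun i : Fin m => M' i j = 1) with hT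
      have hτ : M' i0 ∈ types M' := Finset.mem_image_of_mem _ (Finset.mem_univ i0)
      have hclne : i0 ∈ cluster M' (M' i0) := by simp [cluster]
      have hcl : fairletSize γ ≤ (cluster M' (M' i0)).card :=
        fairSet_card_lower hm γ _ (hfair _ hτ) ⟨i0, hclne⟩
      have hsubT : cluster M' (M' i0) ⊆ T := by
        intro i hi
        rw [cluster, Finset.mem_filter] at hi
        rw [hT, Finset.mem_filter]
        exact ⟨Finset.mem_univ _, by rw [hi.2]; exact hM'0⟩
      have hT2 : 2 * w ≤ T.card :=
        le_trans hc (le_trans hcl (Finset.card_le_card hsubT))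
      set Ta := Finset.univ.filter (fun i : Fin m => M' i j = 1 ∧ M i j = 1) with hTa
      have split2 : Ta.card + Se.card = T.card := by
        have hSe' : Se = Finset.univ.filter (fun i : Fin m => M' i j = 1 ∧ ¬ M i j = 1) := by
          rw [hSe]; ext i; simp [and_comm]
        rw [hTa, hSe', hT, ← Finset.filter_filter, ← Finset.filter_filter]
        exact Finset.card_filter_add_card_filter_not _
      have hTaSa : Ta.card = Sa.card := by
        rw [hTa, hSa]; congr 1; ext i; simp [and_comm]
      have hTaw : Ta.card ≤ w := by
        refine le_trans (Finset.card_le_card ?_) hwj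
        intro i hi
        rw [hTa, Finset.mem_filter] at hi
        exact Finset.mem_filter.mpr ⟨Finset.mem_univ _, hi.2.2⟩
      omega
    · simp [Finset.not_nonempty_iff_eq_empty.mp hne]
  have hdisj : Disjoint Sb Se := by
    rw [Finset.disjoint_left]
    intro i hib hie
    rw [hSb, Finset.mem_filter] at hib
    rw [hSe, Finset.mem_filter] at hie
    exact hie.2.1 hib.2.1
  have hfin2 : ∀ x y : Fin 2, (x = 1 ∧ ¬ y = 1) ∨ (¬ x = 1 ∧ y = 1) → x ≠ y := by decide
  have hsubD : Sb ∪ Se ⊆ Finset.univ.filter (fun i : Fin m => M i j ≠ M' i j) := by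
    intro i hi
    rw [Finset.mem_union] at hi
    refine Finset.mem_filter.mpr ⟨Finset.mem_univ _, ?_⟩
    rcases hi with hi | hi
    · rw [hSb, Finset.mem_filter] at hi
      exact hfin2 _ _ (Or.inl hi.2)
    · rw [hSe, Finset.mem_filter] at hi
      exact hfin2 _ _ (Or.inr hi.2)
  have := Finset.card_le_card hsubD
  rw [Finset.card_union_of_disjoint hdisj] at this
  omega

/-- For binary matrices with at most `w` ones per column and
fairlet size at least `2w`, the instance is solvable iff the budget covers
all ones of `M`. -/
theorem sparse_binary_solvable_iff (hm : 0 < m) (hn : 0 < n)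
    (γ : Fin m → Fin c) (hγ : Function.Surjective γ)
    (M : Fin m → Fin n → Fin 2) (w k r : ℕ) (hr : 1 ≤ r)
    (hw : ∀ j : Fin n, (Finset.univ.filter (fun i : Fin m => M i j = 1)).card ≤ w)
    (hc : 2 * w ≤ fairletSize γ) :
    (∃ M' : Fin m → Fin n → Fin 2, fairMatrix γ M' ∧ dr M' ≤ r ∧ editCost M M' ≤ k) ↔
      ((Finset.univ : Finset (Fin m × Fin n)).filter (fun p => M p.1 p.2 = 1)).card ≤ k := by
  constructor
  · rintro ⟨M', hfair, -, hcost⟩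
    refine le_trans ?_ hcost
    rw [editCost, card_filter_prod (fun i j => M i j ≠ M' i j),
      card_filter_prod (fun i j => M i j = 1)]
    exact Finset.sum_le_sum fun j _ => col_ineq hm γ M M' w hfair hc j (hw j)
  · intro hk
    refine ⟨fun _ _ => 0, ?_, ?_, ?_⟩
    · intro τ hτ z
      obtain ⟨i, -, hi⟩ := Finset.mem_image.mp hτ
      have hcl : cluster (fun (_ : Fin m) (_ : Fin n) => (0 : Fin 2)) τ = Finset.univ := by
        ext i'; simp [cluster, ← hi]
      rw [hcl, Finset.card_univ, Fintype.card_fin]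
      rw [mul_comm]
      rfl
    · have : Nonempty (Fin m) := ⟨⟨0, hm⟩⟩
      rw [dr, types]
      calc (Finset.univ.image (fun _ : Fin m => fun _ : Fin n => (0 : Fin 2))).card
          = 1 := by rw [Finset.image_const Finset.univ_nonempty]; simp
        _ ≤ r := hr
    · have h2 : ∀ x : Fin 2, ¬ x = 0 ↔ x = 1 := by decide
      rw [editCost]
      have he : ((Finset.univ : Finset (Fin m × Fin n)).filter
          (fun p => M p.1 p.2 ≠ (fun (_ : Fin m) (_ : Fin n) => (0 : Fin 2)) p.1 p.2))
          = (Finset.univ : Finset (Fin m × Fin n)).filter (fun p => M p.1 p.2 = 1) := by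
        ext p; simp [h2]
      rw [he]; exact hk
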